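/- Define ρ(α) = (β+γ-1)·f(α), where f(α) = √( α(1-α) / ((αβ+(1-α)(1-γ))(α(1-β)+(1-α)γ)) ). Then ρ is strictly concave on (0,1) if 1 < β+γ < 2, and strictly convex on (0,1) if 0 < β+γ < 1. -/

import Mathlib

open Set

private lemma rhoKpos (a b c e : ℝ) (ha : 0 < a) (hb : 0 < b) (hc : 0 < c) (he : 0 < e) :
    0 < b^2*e^3 + b^2*c*e^2 + b^3*e^2 + 4*b^3*c*e + 4*a*b*e^3 + 10*a*b*c*e^2
      + 10*a*b*c^2*e + 4*a*b*c^3 + a*b^2*e^2 + 10*a*b^2*c*e + a^2*c^2*e + a^2*c^3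
      + 10*a^2*b*c*e + a^2*b*c^2 + 4*a^3*c*e + a^3*c^2 := by positivity

private noncomputable def rhoD (β γ α : ℝ) : ℝ :=
  (α * β + (1 - α) * (1 - γ)) * (α * (1 - β) + (1 - α) * γ)

private noncomputable def rhoDp (β γ α : ℝ) : ℝ :=
  (β + γ - 1) * ((α * (1 - β) + (1 - α) * γ) - (α * β + (1 - α) * (1 - γ)))

private noncomputable def rhoH (β γ α : ℝ) : ℝ := α * (1 - α) / rhoD β γ α

private noncomputable def rhoH1 (β γ α : ℝ) : ℝ :=
  ((1 - 2*α) * rhoD β γ α - α * (1 - α) * rhoDp β γ α) / (rhoD β γ α)^2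

private noncomputable def rhoH2 (β γ α : ℝ) : ℝ :=
  (((-2) * rhoD β γ α + α * (1 - α) * (2*(β + γ - 1)^2)) * rhoD β γ α
    - 2 * rhoDp β γ α * ((1 - 2*α) * rhoD β γ α - α * (1 - α) * rhoDp β γ α)) / (rhoD β γ α)^3

private noncomputable def rhoG (β γ α : ℝ) : ℝ := rhoH1 β γ α / (2 * Real.sqrt (rhoH β γ α))

section aux
variable {β γ α : ℝ}

private lemma rhoD_pos (hβ : β ∈ Set.Ioo (0:ℝ) 1) (hγ : γ ∈ Set.Ioo (0:ℝ) 1)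
    (hα : α ∈ Set.Ioo (0:ℝ) 1) : 0 < rhoD β γ α := by
  obtain ⟨hb0, hb1⟩ := hβ; obtain ⟨hg0, hg1⟩ := hγ; obtain ⟨ha0, ha1⟩ := hα
  have h1 : 0 < α * β + (1 - α) * (1 - γ) :=
    add_pos (mul_pos ha0 hb0) (mul_pos (by linarith) (by linarith))
  have h2 : 0 < α * (1 - β) + (1 - α) * γ :=
    add_pos (mul_pos ha0 (by linarith)) (mul_pos (by linarith) hg0)
  exact mul_pos h1 h2

private lemma rhoH_pos (hβ : β ∈ Set.Ioo (0:ℝ) 1) (hγ : γ ∈ Set.Ioo (0:ℝ) 1)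
    (hα : α ∈ Set.Ioo (0:ℝ) 1) : 0 < rhoH β γ α :=
  div_pos (mul_pos hα.1 (by linarith [hα.2])) (rhoD_pos hβ hγ hα)

private lemma hasDerivAt_rhoD : HasDerivAt (rhoD β γ) (rhoDp β γ α) α := by
  have h1 : HasDerivAt (fun x : ℝ => x * β + (1 - x) * (1 - γ)) (β + γ - 1) α := by
    have := ((hasDerivAt_id α).mul_const β).add
      (((hasDerivAt_const α (1:ℝ)).sub (hasDerivAt_id α)).mul_const (1 - γ))
    simp only [id_eq] at this
    exact this.congr_deriv (by ring)
  have h2 : HasDerivAt (fun x : ℝ => x * (1 - β) + (1 - x) * γ) (-(β + γ - 1)) α := by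
    have := ((hasDerivAt_id α).mul_const (1 - β)).add
      (((hasDerivAt_const α (1:ℝ)).sub (hasDerivAt_id α)).mul_const γ)
    simp only [id_eq] at this
    exact this.congr_deriv (by ring)
  have h3 := h1.mul h2
  have h4 : rhoDp β γ α = (β + γ - 1) * (α * (1 - β) + (1 - α) * γ)
      + (α * β + (1 - α) * (1 - γ)) * -(β + γ - 1) := by unfold rhoDp; ring
  rw [show rhoD β γ = fun x => (x * β + (1 - x) * (1 - γ)) * (x * (1 - β) + (1 - x) * γ)
    from rfl, h4]
  exact h3

private lemma hasDerivAt_rhoN : HasDerivAt (fun x : ℝ => x * (1 - x)) (1 - 2*α) α := by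
  have := (hasDerivAt_id α).mul ((hasDerivAt_const α (1:ℝ)).sub (hasDerivAt_id α))
  simp only [id_eq] at this
  exact this.congr_deriv (by simp only [Pi.sub_apply, id_eq]; ring)

private lemma hasDerivAt_rhoH (hD : rhoD β γ α ≠ 0) :
    HasDerivAt (rhoH β γ) (rhoH1 β γ α) α := by
  have h := (hasDerivAt_rhoN (α := α)).div (hasDerivAt_rhoD (β := β) (γ := γ) (α := α)) hD
  have h4 : rhoH1 β γ α = ((1 - 2*α) * rhoD β γ α - α * (1 - α) * rhoDp β γ α)
      / rhoD β γ α ^ 2 := rfl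
  rw [show rhoH β γ = fun x => x * (1 - x) / rhoD β γ x from rfl, h4]
  exact h

private lemma hasDerivAt_rhoDp : HasDerivAt (rhoDp β γ) (-2 * (β + γ - 1)^2) α := by
  have h1 : HasDerivAt (fun x : ℝ => (x * (1 - β) + (1 - x) * γ) - (x * β + (1 - x) * (1 - γ)))
      (-2 * (β + γ - 1)) α := by
    have := (((hasDerivAt_id α).mul_const (1 - β)).add
        (((hasDerivAt_const α (1:ℝ)).sub (hasDerivAt_id α)).mul_const γ)).sub
      (((hasDerivAt_id α).mul_const β).add
        (((hasDerivAt_const α (1:ℝ)).sub (hasDerivAt_id α)).mul_const (1 - γ)))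
    simp only [id_eq] at this
    exact this.congr_deriv (by ring)
  have h2 := h1.const_mul (β + γ - 1)
  rw [show rhoDp β γ = fun x => (β + γ - 1) * ((x * (1 - β) + (1 - x) * γ)
      - (x * β + (1 - x) * (1 - γ))) from rfl]
  exact h2.congr_deriv (by ring)

private lemma hasDerivAt_rhoH1 (hD : rhoD β γ α ≠ 0) :
    HasDerivAt (rhoH1 β γ) (rhoH2 β γ α) α := by
  have hnum : HasDerivAt (fun x => (1 - 2*x) * rhoD β γ x - x * (1 - x) * rhoDp β γ x)
      ((-2) * rhoD β γ α + α * (1 - α) * (2*(β + γ - 1)^2)) α := by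
    have hlin : HasDerivAt (fun x : ℝ => 1 - 2*x) (-2) α := by
      have := (hasDerivAt_const α (1:ℝ)).sub ((hasDerivAt_id α).const_mul 2)
      simp only [id_eq] at this
      exact this.congr_deriv (by ring)
    have h1 := hlin.mul (hasDerivAt_rhoD (β := β) (γ := γ) (α := α))
    have h2 := (hasDerivAt_rhoN (α := α)).mul (hasDerivAt_rhoDp (β := β) (γ := γ) (α := α))
    have h3 := h1.sub h2
    exact h3.congr_deriv (by ring)
  have hden : HasDerivAt (fun x => (rhoD β γ x)^2) (2 * rhoD β γ α * rhoDp β γ α) α := by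
    have := (hasDerivAt_rhoD (β := β) (γ := γ) (α := α)).pow 2
    exact this.congr_deriv (by ring)
  have hD2 : (rhoD β γ α)^2 ≠ 0 := pow_ne_zero 2 hD
  have h := hnum.div hden hD2
  rw [show rhoH1 β γ = fun x => ((1 - 2*x) * rhoD β γ x - x * (1 - x) * rhoDp β γ x)
      / (rhoD β γ x)^2 from rfl]
  refine h.congr_deriv ?_
  rw [show rhoH2 β γ α = (((-2) * rhoD β γ α + α * (1 - α) * (2*(β + γ - 1)^2)) * rhoD β γ α
    - 2 * rhoDp β γ α * ((1 - 2*α) * rhoD β γ α - α * (1 - α) * rhoDp β γ α))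
      / (rhoD β γ α)^3 from rfl]
  field_simp

private lemma hasDerivAt_sqrt_rhoH (hβ : β ∈ Set.Ioo (0:ℝ) 1) (hγ : γ ∈ Set.Ioo (0:ℝ) 1)
    (hα : α ∈ Set.Ioo (0:ℝ) 1) :
    HasDerivAt (fun x => Real.sqrt (rhoH β γ x)) (rhoG β γ α) α := by
  have hH := rhoH_pos hβ hγ hα
  exact (hasDerivAt_rhoH (rhoD_pos hβ hγ hα).ne').sqrt hH.ne'

set_option maxHeartbeats 2000000 in
private lemma rho_key (hβ : β ∈ Set.Ioo (0:ℝ) 1) (hγ : γ ∈ Set.Ioo (0:ℝ) 1)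
    (hα : α ∈ Set.Ioo (0:ℝ) 1) :
    2 * rhoH β γ α * rhoH2 β γ α - (rhoH1 β γ α)^2 < 0 := by
  have hD : 0 < rhoD β γ α := rhoD_pos hβ hγ hα
  obtain ⟨hb0, hb1⟩ := hβ; obtain ⟨hg0, hg1⟩ := hγ; obtain ⟨ha0, ha1⟩ := hα
  have hK := rhoKpos ((1-α)*(1-γ)) (α*β) ((1-α)*γ) (α*(1-β))
    (mul_pos (by linarith) (by linarith)) (mul_pos ha0 hb0)
    (mul_pos (by linarith) hg0) (mul_pos ha0 (by linarith))
  have hEq : 2 * rhoH β γ α * rhoH2 β γ α - (rhoH1 β γ α)^2 =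
      (2 * (α * (1 - α)) * ((((-2) * rhoD β γ α + α * (1 - α) * (2*(β + γ - 1)^2)) * rhoD β γ α
        - 2 * rhoDp β γ α * ((1 - 2*α) * rhoD β γ α - α * (1 - α) * rhoDp β γ α))
        - 2 * rhoDp β γ α * 0)
        - ((1 - 2*α) * rhoD β γ α - α * (1 - α) * rhoDp β γ α)^2) / (rhoD β γ α)^4 := by
    rw [show rhoH β γ α = α * (1 - α) / rhoD β γ α from rfl,
      show rhoH1 β γ α = ((1 - 2*α) * rhoD β γ α - α * (1 - α) * rhoDp β γ α)
        / (rhoD β γ α)^2 from rfl,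
      show rhoH2 β γ α = (((-2) * rhoD β γ α + α * (1 - α) * (2*(β + γ - 1)^2)) * rhoD β γ α
        - 2 * rhoDp β γ α * ((1 - 2*α) * rhoD β γ α - α * (1 - α) * rhoDp β γ α))
        / (rhoD β γ α)^3 from rfl]
    field_simp
    ring
  rw [hEq]
  apply div_neg_of_neg_of_pos _ (pow_pos hD 4)
  have hnum : 2 * (α * (1 - α)) * ((((-2) * rhoD β γ α + α * (1 - α) * (2*(β + γ - 1)^2)) * rhoD β γ α
        - 2 * rhoDp β γ α * ((1 - 2*α) * rhoD β γ α - α * (1 - α) * rhoDp β γ α))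
        - 2 * rhoDp β γ α * 0)
        - ((1 - 2*α) * rhoD β γ α - α * (1 - α) * rhoDp β γ α)^2 =
      -((α*β)^2*((α*(1-β)))^3 + (α*β)^2*((1-α)*γ)*(α*(1-β))^2 + (α*β)^3*(α*(1-β))^2
        + 4*(α*β)^3*((1-α)*γ)*(α*(1-β)) + 4*((1-α)*(1-γ))*(α*β)*(α*(1-β))^3
        + 10*((1-α)*(1-γ))*(α*β)*((1-α)*γ)*(α*(1-β))^2
        + 10*((1-α)*(1-γ))*(α*β)*((1-α)*γ)^2*(α*(1-β)) + 4*((1-α)*(1-γ))*(α*β)*((1-α)*γ)^3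
        + ((1-α)*(1-γ))*(α*β)^2*(α*(1-β))^2 + 10*((1-α)*(1-γ))*(α*β)^2*((1-α)*γ)*(α*(1-β))
        + ((1-α)*(1-γ))^2*((1-α)*γ)^2*(α*(1-β)) + ((1-α)*(1-γ))^2*((1-α)*γ)^3
        + 10*((1-α)*(1-γ))^2*(α*β)*((1-α)*γ)*(α*(1-β)) + ((1-α)*(1-γ))^2*(α*β)*((1-α)*γ)^2
        + 4*((1-α)*(1-γ))^3*((1-α)*γ)*(α*(1-β)) + ((1-α)*(1-γ))^3*((1-α)*γ)^2) := by
    rw [show rhoD β γ α = (α * β + (1 - α) * (1 - γ)) * (α * (1 - β) + (1 - α) * γ) from rfl,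
      show rhoDp β γ α = (β + γ - 1) * ((α * (1 - β) + (1 - α) * γ)
        - (α * β + (1 - α) * (1 - γ))) from rfl]
    ring
  rw [hnum]
  linarith [hK]

private lemma hasDerivAt_rhoG (hβ : β ∈ Set.Ioo (0:ℝ) 1) (hγ : γ ∈ Set.Ioo (0:ℝ) 1)
    (hα : α ∈ Set.Ioo (0:ℝ) 1) :
    HasDerivAt (rhoG β γ)
      ((rhoH2 β γ α * (2 * Real.sqrt (rhoH β γ α))
        - rhoH1 β γ α * (2 * (rhoH1 β γ α / (2 * Real.sqrt (rhoH β γ α)))))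
        / (2 * Real.sqrt (rhoH β γ α))^2) α := by
  have hH := rhoH_pos hβ hγ hα
  have hs : 0 < Real.sqrt (rhoH β γ α) := Real.sqrt_pos.2 hH
  have hden : HasDerivAt (fun x => 2 * Real.sqrt (rhoH β γ x))
      (2 * (rhoH1 β γ α / (2 * Real.sqrt (rhoH β γ α)))) α := by
    have := (hasDerivAt_sqrt_rhoH hβ hγ hα).const_mul 2
    rw [show rhoG β γ α = rhoH1 β γ α / (2 * Real.sqrt (rhoH β γ α)) from rfl] at this
    exact this
  have h := (hasDerivAt_rhoH1 (rhoD_pos hβ hγ hα).ne').div hden (by positivity)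
  rw [show rhoG β γ = fun x => rhoH1 β γ x / (2 * Real.sqrt (rhoH β γ x)) from rfl]
  exact h

private lemma rhoG_deriv_neg (hβ : β ∈ Set.Ioo (0:ℝ) 1) (hγ : γ ∈ Set.Ioo (0:ℝ) 1)
    (hα : α ∈ Set.Ioo (0:ℝ) 1) :
    (rhoH2 β γ α * (2 * Real.sqrt (rhoH β γ α))
        - rhoH1 β γ α * (2 * (rhoH1 β γ α / (2 * Real.sqrt (rhoH β γ α)))))
        / (2 * Real.sqrt (rhoH β γ α))^2 < 0 := by
  have hH := rhoH_pos hβ hγ hα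
  have hs : 0 < Real.sqrt (rhoH β γ α) := Real.sqrt_pos.2 hH
  have hr2 : Real.sqrt (rhoH β γ α) * Real.sqrt (rhoH β γ α) = rhoH β γ α :=
    Real.mul_self_sqrt hH.le
  apply div_neg_of_neg_of_pos _ (by positivity)
  have hN0 : rhoH2 β γ α * (2 * Real.sqrt (rhoH β γ α))
      - rhoH1 β γ α * (2 * (rhoH1 β γ α / (2 * Real.sqrt (rhoH β γ α))))
      = (2 * (Real.sqrt (rhoH β γ α) * Real.sqrt (rhoH β γ α)) * rhoH2 β γ α
        - (rhoH1 β γ α)^2) / Real.sqrt (rhoH β γ α) := by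
    field_simp
  rw [hN0, hr2]
  exact div_neg_of_neg_of_pos (rho_key hβ hγ hα) hs

private lemma rho_sqrt_strictConcave (hβ : β ∈ Set.Ioo (0:ℝ) 1)
    (hγ : γ ∈ Set.Ioo (0:ℝ) 1) :
    StrictConcaveOn ℝ (Set.Ioo (0:ℝ) 1) (fun α => Real.sqrt (rhoH β γ α)) := by
  apply strictConcaveOn_of_deriv2_neg (convex_Ioo 0 1)
  · apply ContinuousOn.sqrt
    have hc : ContinuousOn (rhoD β γ) (Set.Ioo (0:ℝ) 1) := by
      rw [show rhoD β γ = fun α => (α * β + (1 - α) * (1 - γ)) * (α * (1 - β) + (1 - α) * γ)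
        from rfl]
      fun_prop
    exact ContinuousOn.div (by fun_prop) hc (fun x hx => (rhoD_pos hβ hγ hx).ne')
  · intro x hx
    rw [interior_Ioo] at hx
    have hEq : deriv (fun α => Real.sqrt (rhoH β γ α)) =ᶠ[nhds x] rhoG β γ := by
      filter_upwards [Ioo_mem_nhds hx.1 hx.2] with y hy
      exact (hasDerivAt_sqrt_rhoH hβ hγ hy).deriv
    have hit : deriv^[2] (fun α => Real.sqrt (rhoH β γ α)) x
        = deriv (deriv (fun α => Real.sqrt (rhoH β γ α))) x := rfl
    rw [hit, hEq.deriv_eq, (hasDerivAt_rhoG hβ hγ hx).deriv]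
    exact rhoG_deriv_neg hβ hγ hx

end aux

theorem rho_concave_or_convex (β γ : ℝ) (hβ : β ∈ Set.Ioo (0:ℝ) 1) (hγ : γ ∈ Set.Ioo (0:ℝ) 1) :
    ((1 < β + γ ∧ β + γ < 2) →
      StrictConcaveOn ℝ (Set.Ioo (0:ℝ) 1)
        (fun α => (β + γ - 1) * Real.sqrt (α * (1 - α) /
          ((α * β + (1 - α) * (1 - γ)) * (α * (1 - β) + (1 - α) * γ)))))
    ∧ ((0 < β + γ ∧ β + γ < 1) →
      StrictConvexOn ℝ (Set.Ioo (0:ℝ) 1)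
        (fun α => (β + γ - 1) * Real.sqrt (α * (1 - α) /
          ((α * β + (1 - α) * (1 - γ)) * (α * (1 - β) + (1 - α) * γ))))) := by
  have hf := rho_sqrt_strictConcave hβ hγ
  have hfun : ∀ α : ℝ, α * (1 - α) / ((α * β + (1 - α) * (1 - γ)) * (α * (1 - β) + (1 - α) * γ))
      = rhoH β γ α := fun α => rfl
  constructor
  · rintro ⟨h1, -⟩
    have hs : 0 < β + γ - 1 := by linarith
    refine ⟨hf.1, fun {x} hx {y} hy hxy {a b} ha hb hab => ?_⟩
    have H := hf.2 hx hy hxy ha hb hab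
    simp only [smul_eq_mul, hfun] at H ⊢
    nlinarith [mul_lt_mul_of_pos_left H hs]
  · rintro ⟨-, h2⟩
    have hs : β + γ - 1 < 0 := by linarith
    refine ⟨hf.1, fun {x} hx {y} hy hxy {a b} ha hb hab => ?_⟩
    have H := hf.2 hx hy hxy ha hb hab
    simp only [smul_eq_mul, hfun] at H ⊢
    nlinarith [mul_lt_mul_of_neg_left H hs]
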